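/- Let Z and W be Banach spaces, let I be a closed subspace of L(Z,W), and let {zₙ} be a sequence in the unit sphere of Z such that for every n the evaluation map Φₙ : I → W, Φₙ(T) = T(zₙ), is surjective. Then for every residual subset D of W, the set B = {T ∈ I : T(zₙ) ∈ D for all n ∈ ℕ} is residual in I. -/

import Mathlib

open Filter Topology RCLike Bornology

set_option synthInstance.maxHeartbeats 1000000 in
lemma isGδ_preimage' {X Y : Type*} [TopologicalSpace X] [TopologicalSpace Y]
    {f : X → Y} (hf : Continuous f) {s : Set Y} (hs : IsGδ s) : IsGδ (f ⁻¹' s) := by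
  obtain ⟨T, ho, hc, rfl⟩ := hs
  rw [Set.sInter_eq_biInter, Set.preimage_iInter₂]
  exact IsGδ.biInter hc fun t ht => ((ho t ht).preimage hf).isGδ

/-- `f` strongly exposes the bounded set `C` at `x₀`. -/
def StronglyExposes {𝕜 X : Type} [RCLike 𝕜] [NormedAddCommGroup X] [NormedSpace 𝕜 X]
    (f : X →L[𝕜] 𝕜) (C : Set X) (x₀ : X) : Prop :=
  x₀ ∈ C ∧ (∀ x ∈ C, re (f x) ≤ re (f x₀)) ∧
    ∀ u : ℕ → X, (∀ n, u n ∈ C) →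
      Tendsto (fun n => re (f (u n))) atTop (𝓝 (re (f x₀))) →
      Tendsto u atTop (𝓝 x₀)

/-- `f` strongly exposes the closed unit ball at `x₀`. -/
def StronglyExposesBall {𝕜 X : Type} [RCLike 𝕜] [NormedAddCommGroup X] [NormedSpace 𝕜 X]
    (f : X →L[𝕜] 𝕜) (x₀ : X) : Prop :=
  ‖x₀‖ ≤ 1 ∧ re (f x₀) = ‖f‖ ∧
    ∀ u : ℕ → X, (∀ n, ‖u n‖ ≤ 1) →
      Tendsto (fun n => re (f (u n))) atTop (𝓝 ‖f‖) →
      Tendsto u atTop (𝓝 x₀)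

/-- `T` absolutely strongly exposes the closed unit ball at `x₀`. -/
def AbsStronglyExposes {𝕜 X Y : Type} [RCLike 𝕜] [NormedAddCommGroup X] [NormedSpace 𝕜 X]
    [NormedAddCommGroup Y] [NormedSpace 𝕜 Y] (T : X →L[𝕜] Y) (x₀ : X) : Prop :=
  ‖x₀‖ ≤ 1 ∧
    ∀ u : ℕ → X, (∀ n, ‖u n‖ ≤ 1) →
      Tendsto (fun n => ‖T (u n)‖) atTop (𝓝 ‖T‖) →
      ∃ θ : ℕ → 𝕜, (∀ n, ‖θ n‖ = 1) ∧ Tendsto (fun n => θ n • u n) atTop (𝓝 x₀)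

set_option synthInstance.maxHeartbeats 1000000 in
theorem stmt9 {𝕜 Z W : Type} [RCLike 𝕜]
    [NormedAddCommGroup Z] [NormedSpace 𝕜 Z] [CompleteSpace Z]
    [NormedAddCommGroup W] [NormedSpace 𝕜 W] [CompleteSpace W]
    (I : Submodule 𝕜 (Z →L[𝕜] W)) (hI : IsClosed (I : Set (Z →L[𝕜] W)))
    (z : ℕ → Z) (hz : ∀ n, ‖z n‖ = 1)
    (hsurj : ∀ (n : ℕ) (w : W), ∃ T ∈ I, T (z n) = w)
    (D : Set W) (hD : ∃ G ⊆ D, IsGδ G ∧ Dense G) :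
    ∃ G : Set I, (∀ S ∈ G, ∀ n, (S : Z →L[𝕜] W) (z n) ∈ D) ∧ IsGδ G ∧ Dense G := by
  obtain ⟨G₀, hG₀D, hGδ, hdense⟩ := hD
  haveI : CompleteSpace I := hI.completeSpace_coe
  -- evaluation maps
  set Φ : ℕ → (I →L[𝕜] W) := fun n =>
    (ContinuousLinearMap.apply 𝕜 W (z n)).comp (I.subtypeL) with hΦ
  have hΦsurj : ∀ n, Function.Surjective (Φ n) := by
    intro n w
    obtain ⟨T, hT, hTw⟩ := hsurj n w
    exact ⟨⟨T, hT⟩, hTw⟩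
  have hΦopen : ∀ n, IsOpenMap (Φ n) := fun n =>
    by have h := @ContinuousLinearMap.isOpenMap 𝕜 𝕜 _ _ (RingHom.id 𝕜) I _ _ W _ _ (Φ n); exact h (hΦsurj n)
  refine ⟨⋂ n, (Φ n) ⁻¹' G₀, ?_, ?_, ?_⟩
  · intro S hS n
    exact hG₀D (Set.mem_iInter.1 hS n)
  · exact IsGδ.iInter fun n => isGδ_preimage' (Φ n).continuous hGδ
  · exact dense_iInter_of_Gδ (fun n => isGδ_preimage' (Φ n).continuous hGδ)
      (fun n => hdense.preimage (hΦopen n))
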